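/- Proposition (regular points have non-critical orbits): For every e ∈ ℰ there exists λ₀ > 0 such that for all 0 < λ < λ₀: if z ∈ X^e is regular, then the return orbit O_τ(z) is not critical, i.e. there exist no w ∈ O_τ(z) and m, n ∈ ℤ with R(w) = (m,n) such that R(F_λ⁴(w)) differs from (m,n) in both coordinates (that is, R(F_λ⁴(w)) = (m±1, n±1)). -/

import Mathlib

open scoped Classical

noncomputable section

open Set

/-- The scaled round-off map `F_λ` on the plane: `F_λ(z) = λ·F(z/λ)`,
so `F_λ(z) = (λ⌊z₁⌋ − z₂, z₁)`. -/
def Fl (lam : ℝ) (z : ℝ × ℝ) : ℝ × ℝ := (lam * (⌊z.1⌋ : ℝ) - z.2, z.1)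

/-- The inverse of `F_λ`. -/
def Flinv (lam : ℝ) (z : ℝ × ℝ) : ℝ × ℝ := (z.2, lam * (⌊z.2⌋ : ℝ) - z.1)

/-- Integer iterate `F_λ^k`, `k ∈ ℤ`. -/
def FlIter (lam : ℝ) (k : ℤ) (z : ℝ × ℝ) : ℝ × ℝ :=
  if 0 ≤ k then (Fl lam)^[k.toNat] z else (Flinv lam)^[(-k).toNat] z

/-- Membership in the scaled lattice `(λℤ)²`. -/
def IsLatticePt (lam : ℝ) (z : ℝ × ℝ) : Prop := ∃ a b : ℤ, z = (lam * a, lam * b)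

/-- The discrete vector field `𝐯(z) = F_λ⁴(z) − z`. -/
def vfield (lam : ℝ) (z : ℝ × ℝ) : ℝ × ℝ := (Fl lam)^[4] z - z

/-- The auxiliary (integrable) vector field `𝐰`. -/
def wfield (lam : ℝ) (z : ℝ × ℝ) : ℝ × ℝ :=
  (lam * (2 * (⌊z.2⌋ : ℝ) + 1), -(lam * (2 * (⌊z.1⌋ : ℝ) + 1)))

/-- The constant value `𝐰_{m,n}` of `𝐰` on the box `B_{m,n}`. -/
def wmn (lam : ℝ) (m n : ℤ) : ℝ × ℝ :=
  (lam * (2 * (n : ℝ) + 1), -(lam * (2 * (m : ℝ) + 1)))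

/-- The piecewise-affine function `P(x) = ⌊x⌋² + (2⌊x⌋+1)(x − ⌊x⌋)`. -/
def Pfun (x : ℝ) : ℝ := (⌊x⌋ : ℝ) ^ 2 + (2 * (⌊x⌋ : ℝ) + 1) * (x - (⌊x⌋ : ℝ))

/-- The Hamiltonian `𝒫(x,y) = P(x) + P(y)`. -/
def Ham (z : ℝ × ℝ) : ℝ := Pfun z.1 + Pfun z.2

/-- The round Hamiltonian `𝒬(x,y) = x² + y²`. -/
def Qfun (z : ℝ × ℝ) : ℝ := z.1 ^ 2 + z.2 ^ 2

/-- The level set `Π(z)` of `𝒫` through `z`. -/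
def levelSet (z : ℝ × ℝ) : Set (ℝ × ℝ) := {w | Ham w = Ham z}

/-- The grid `Δ` of horizontal and vertical integer lines. -/
def DeltaSet : Set (ℝ × ℝ) := {z | (∃ m : ℤ, z.1 = (m : ℝ)) ∨ (∃ n : ℤ, z.2 = (n : ℝ))}

/-- The box `B_{m,n}`. -/
def Bbox (m n : ℤ) : Set (ℝ × ℝ) := {z | ⌊z.1⌋ = m ∧ ⌊z.2⌋ = n}

/-- The lattice `ℤ² ⊂ ℝ²`. -/
def intLattice : Set (ℝ × ℝ) := {z | ∃ a b : ℤ, z = ((a : ℝ), (b : ℝ))}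

/-- `r(c)`: the number of representations of `c` as a sum of two integer squares. -/
def rfun (c : ℝ) : ℕ := Set.ncard {p : ℤ × ℤ | ((p.1 : ℝ)) ^ 2 + ((p.2 : ℝ)) ^ 2 = c}

/-- Euclidean distance from `z` to the symmetry line `y = x`. -/
def dG (z : ℝ × ℝ) : ℝ := |z.1 - z.2| / Real.sqrt 2

/-- The integer round-off `R`. -/
def Rfl (z : ℝ × ℝ) : ℤ × ℤ := (⌊z.1⌋, ⌊z.2⌋)

/-- The rescaled round-off `R_λ(w) = λ·R(w/λ)`. -/
def Rlam (lam : ℝ) (w : ℝ × ℝ) : ℝ × ℝ :=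
  (lam * (⌊w.1 / lam⌋ : ℝ), lam * (⌊w.2 / lam⌋ : ℝ))

/-- The return domain `X`. -/
def Xdom (lam : ℝ) : Set (ℝ × ℝ) :=
  {z | IsLatticePt lam z ∧ 0 ≤ z.1 ∧ 0 ≤ z.2 ∧
    dG z ≤ dG ((Fl lam)^[4] z) ∧ dG z < dG ((Flinv lam)^[4] z)}

/-- Forward transit time `τ` to `X`. -/
def tau (lam : ℝ) (z : ℝ × ℝ) : ℕ := sInf {k : ℕ | 1 ≤ k ∧ (Fl lam)^[k] z ∈ Xdom lam}

/-- Backward transit time `τ₋` to `X`. -/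
def tauMinus (lam : ℝ) (z : ℝ × ℝ) : ℕ := sInf {k : ℕ | (Flinv lam)^[k] z ∈ Xdom lam}

/-- The return orbit `O_τ(z)`. -/
def returnOrbit (lam : ℝ) (z : ℝ × ℝ) : Set (ℝ × ℝ) :=
  {w | ∃ k : ℤ, -(tauMinus lam z : ℤ) ≤ k ∧ k ≤ (tau lam z : ℤ) ∧ w = FlIter lam k z}

/-- The first-return map `Φ`. -/
def Phi (lam : ℝ) (z : ℝ × ℝ) : ℝ × ℝ := (Fl lam)^[tau lam z] z

/-- The full orbit `O(z) = {F_λ^t(z) : t ∈ ℤ}`. -/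
def fullOrbit (lam : ℝ) (z : ℝ × ℝ) : Set (ℝ × ℝ) := {w | ∃ t : ℤ, w = FlIter lam t z}

/-- The set `Λ` of transition points. -/
def TransSet (lam : ℝ) : Set (ℝ × ℝ) :=
  {z | IsLatticePt lam z ∧ Rfl ((Fl lam)^[4] z) ≠ Rfl z}

/-- The set `Σ = ⋃ Σ_{m,n}`. -/
def SigmaSet (lam : ℝ) : Set (ℝ × ℝ) :=
  {z | z ∈ TransSet lam ∧ ∃ m n : ℤ,
    max |z.1 - (m : ℝ)| |z.2 - (n : ℝ)| ≤
      lam * (max |2 * (m : ℝ) + 1| |2 * (n : ℝ) + 1| + 2)}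

/-- `ℰ`: the natural numbers which are sums of two integer squares. -/
def Eset : Set ℕ := {n | ∃ a b : ℤ, (n : ℤ) = a ^ 2 + b ^ 2}

/-- The successor of `e` in `ℰ`. -/
def nextE (e : ℕ) : ℕ := sInf {f | f ∈ Eset ∧ e < f}

/-- The critical interval `I^e = (e, e′)`. -/
def Icrit (e : ℕ) : Set ℝ := Set.Ioo (e : ℝ) (nextE e : ℝ)

/-- The set `X^e`. -/
def Xe (lam : ℝ) (e : ℕ) : Set (ℝ × ℝ) :=
  {z | z ∈ Xdom lam ∧ ∀ w ∈ returnOrbit lam z, Ham w ∈ Icrit e}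

/-- A point of `X^e` is regular if it is not a transition point and its return
orbit avoids `Σ`. -/
def IsRegularPt (lam : ℝ) (e : ℕ) (z : ℝ × ℝ) : Prop :=
  z ∈ Xe lam e ∧ z ∉ TransSet lam ∧ returnOrbit lam z ∩ SigmaSet lam = ∅

/-- `J` is a maximal subinterval `Ĩ^e(λ)` of `I^e` on which all points of `X^e`
are regular. -/
def IsMaxRegInterval (lam : ℝ) (e : ℕ) (J : Set ℝ) : Prop :=
  J ⊆ Icrit e ∧ J.OrdConnected ∧
    (∀ z ∈ Xe lam e, Ham z ∈ J → IsRegularPt lam e z) ∧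
    ∀ J' : Set ℝ, J ⊆ J' → J' ⊆ Icrit e → J'.OrdConnected →
      (∀ z ∈ Xe lam e, Ham z ∈ J' → IsRegularPt lam e z) → J' = J

/-- The regular domain `X̃^e` determined by the interval `J = Ĩ^e(λ)`. -/
def Xtilde (lam : ℝ) (e : ℕ) (J : Set ℝ) : Set (ℝ × ℝ) :=
  {z | z ∈ Xe lam e ∧ Ham z ∈ J}

/-- The type of a vertex: the floor of the absolute value of its non-integer
coordinate. -/
def vtype (z : ℝ × ℝ) : ℕ :=
  if ∃ m : ℤ, z.1 = (m : ℝ) then (⌊|z.2|⌋).toNat else (⌊|z.1|⌋).toNat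

/-- `v` (1-indexed, entries `v 1, …, v k` with `k = ⌊√e⌋+1`) is the vertex list
of the polygon class of `e`, and `o j` records whether the `j`-th vertex lies on
a horizontal lattice line (i.e. has integer `y`-coordinate): for every value
`a ∈ I^e`, the vertices of the level polygon `{𝒫 = a}` lying in the first octant,
enumerated clockwise (i.e. by increasing `x`-coordinate), have types
`v 1, …, v k`. -/
def IsVertexList (e : ℕ) (v : ℕ → ℕ) (o : ℕ → Bool) : Prop :=
  ∀ a ∈ Icrit e, ∃ p : ℕ → ℝ × ℝ,
    (∀ j, 1 ≤ j → j ≤ Nat.sqrt e + 1 →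
      Ham (p j) = a ∧ p j ∈ DeltaSet ∧ 0 ≤ (p j).2 ∧ (p j).2 ≤ (p j).1 ∧
        vtype (p j) = v j ∧ (o j = true ↔ ∃ n : ℤ, (p j).2 = (n : ℝ))) ∧
    (∀ i j, 1 ≤ i → i < j → j ≤ Nat.sqrt e + 1 → (p i).1 < (p j).1) ∧
    (∀ w : ℝ × ℝ, Ham w = a → w ∈ DeltaSet → 0 ≤ w.2 → w.2 ≤ w.1 →
      ∃ j, 1 ≤ j ∧ j ≤ Nat.sqrt e + 1 ∧ w = p j)

/-- The extended vertex list: `v_j = v_{2k−j}` for `k < j ≤ 2k−1`. -/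
def vext (e : ℕ) (v : ℕ → ℕ) (j : ℕ) : ℕ :=
  if j ≤ Nat.sqrt e + 1 then v j else v (2 * (Nat.sqrt e + 1) - j)

/-- The extended orientation list. -/
def oext (e : ℕ) (o : ℕ → Bool) (j : ℕ) : Bool :=
  if j ≤ Nat.sqrt e + 1 then o j else o (2 * (Nat.sqrt e + 1) - j)

/-- The recursively defined integers `q_j` (here `v` is the extended vertex list):
`q₁ = (2v₁+1)²`, `q_j = q_{j−1}` if `v_j = v_{j−1}`, and
`q_j = lcm((2v_j+1)(2v_{j−1}+1), q_{j−1})` otherwise. -/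
def qseq (v : ℕ → ℕ) : ℕ → ℕ
  | 0 => (2 * v 1 + 1) ^ 2
  | 1 => (2 * v 1 + 1) ^ 2
  | j + 2 =>
    if v (j + 2) = v (j + 1) then qseq v (j + 1)
    else Nat.lcm ((2 * v (j + 2) + 1) * (2 * v (j + 1) + 1)) (qseq v (j + 1))

/-- `p_j = q_j/(2v_j+1)`. -/
def pseq (v : ℕ → ℕ) (j : ℕ) : ℕ := qseq v j / (2 * v j + 1)

/-- `q = q_{2k−1}`. -/
def qval (e : ℕ) (v : ℕ → ℕ) : ℕ := qseq (vext e v) (2 * (Nat.sqrt e + 1) - 1)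

/-- The vector `L_j = (λ q_j/(2v₁+1))·(1,1)`. -/
def Lvec (lam : ℝ) (v1 : ℕ) (qj : ℕ) : ℝ × ℝ :=
  (lam * (qj : ℝ) / (2 * (v1 : ℝ) + 1), lam * (qj : ℝ) / (2 * (v1 : ℝ) + 1))

/-- The lattice `𝕃 = ℤ·L_j + ℤ·((L_j − 𝐰_{v₁,v₁})/2)` as an additive subgroup
of `ℝ²`. -/
def latticeL (lam : ℝ) (v1 : ℕ) (qj : ℕ) : AddSubgroup (ℝ × ℝ) :=
  AddSubgroup.closure
    {Lvec lam v1 qj, (2⁻¹ : ℝ) • (Lvec lam v1 qj - wmn lam (v1 : ℤ) (v1 : ℤ))}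

/-- Forward transit time of `F_λ⁴` to `Λ`. -/
def tTrans (lam : ℝ) (z : ℝ × ℝ) : ℕ :=
  sInf {i : ℕ | 1 ≤ i ∧ (Fl lam)^[4 * i] z ∈ TransSet lam}

/-- The strip map `Ψ(z) = F_λ^{4t(z)}(z)`. -/
def Psi (lam : ℝ) (z : ℝ × ℝ) : ℝ × ℝ := (Fl lam)^[4 * tTrans lam z] z

/-- Backward transit time of `F_λ⁻⁴` to `Λ`. -/
def sTrans (lam : ℝ) (z : ℝ × ℝ) : ℕ :=
  sInf {i : ℕ | 1 ≤ i ∧ (Flinv lam)^[4 * i] z ∈ TransSet lam}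

/-- The inverse strip map `Ψ⁻¹`. -/
def PsiInv (lam : ℝ) (z : ℝ × ℝ) : ℝ × ℝ := (Flinv lam)^[4 * sTrans lam z] z

/-- `Ψ^j` for `j ∈ {−1} ∪ ℕ`. -/
def PsiPow (lam : ℝ) (j : ℤ) (z : ℝ × ℝ) : ℝ × ℝ :=
  if j < 0 then PsiInv lam z else (Psi lam)^[j.toNat] z

/-- The coordinate unit vector in the non-integer direction of a vertex lying
on a horizontal (`horiz = true`) resp. vertical lattice line. -/
def evec (horiz : Bool) : ℝ × ℝ := if horiz then (1, 0) else (0, 1)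

/-- `s ∈ {0, …, 2v_j}` is the code entry at a vertex point `w` of type `vj`: if
the vertex lies on a horizontal line `y = n` then, writing
`w = λ(⌈v_j/λ⌉ + x_j, ⌈n/λ⌉ + y_j)` with `|y_j| < 2v_j+1`, `s ≡ y_j (mod 2v_j+1)`;
analogously in the vertical case. -/
def CodeAt (lam : ℝ) (vj : ℕ) (horiz : Bool) (w : ℝ × ℝ) (s : ℤ) : Prop :=
  0 ≤ s ∧ s < 2 * (vj : ℤ) + 1 ∧
    (if horiz then
        ∃ n Y yj : ℤ, w.2 = lam * (Y : ℝ) ∧ Y = ⌈(n : ℝ) / lam⌉ + yj ∧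
          |yj| < 2 * (vj : ℤ) + 1 ∧ s ≡ yj [ZMOD (2 * (vj : ℤ) + 1)]
      else
        ∃ m X xj : ℤ, w.1 = lam * (X : ℝ) ∧ X = ⌈(m : ℝ) / lam⌉ + xj ∧
          |xj| < 2 * (vj : ℤ) + 1 ∧ s ≡ xj [ZMOD (2 * (vj : ℤ) + 1)])

/-- `σ` is the orbit code `(σ₋₁, σ₁, …, σ_{2k−1})` of `z`. -/
def IsOrbitCode (lam : ℝ) (e : ℕ) (v : ℕ → ℕ) (o : ℕ → Bool) (z : ℝ × ℝ)
    (σ : ℤ → ℤ) : Prop :=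
  CodeAt lam (v 1) (!(o 1)) (PsiInv lam z) (σ (-1)) ∧
    ∀ j : ℕ, 1 ≤ j → j ≤ 2 * (Nat.sqrt e + 1) - 1 →
      CodeAt lam (vext e v j) (oext e o j) ((Psi lam)^[j] z) (σ (j : ℤ))

/-- The Euclidean norm on `ℝ²`. -/
def enorm2 (z : ℝ × ℝ) : ℝ := Real.sqrt (z.1 ^ 2 + z.2 ^ 2)

/-- The rotation number `ν(λ) = arccos(λ/2)/(2π)`. -/
def nuRot (lam : ℝ) : ℝ := Real.arccos (lam / 2) / (2 * Real.pi)

/-- Distance from a real number to the nearest integer. -/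
def distInt (x : ℝ) : ℝ := |x - (round x : ℝ)|

/-- The first-order recurrence time `t*(λ)`. -/
def tstar (lam : ℝ) : ℕ :=
  sInf {k : ℕ | 1 ≤ k ∧ distInt ((k : ℝ) * nuRot lam) < distInt (4 * nuRot lam)}

/-- The square `A(r,λ)` of lattice points. -/
def Aset (r lam : ℝ) : Set (ℝ × ℝ) := {z | IsLatticePt lam z ∧ max |z.1| |z.2| < r}

end
private lemma tri (a b : ℝ) : |a - b| ≤ |a| + |b| := by
  rw [sub_eq_add_neg]
  exact (abs_add_le _ _).trans (le_of_eq (by rw [abs_neg]))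

private lemma abs_floor_le (t : ℝ) : |(⌊t⌋ : ℝ)| ≤ |t| + 1 := by
  rw [abs_le]
  constructor
  · nlinarith [Int.lt_floor_add_one t, neg_abs_le t]
  · nlinarith [Int.floor_le t, le_abs_self t]

private lemma Pfun_ge_sq (x : ℝ) : x ^ 2 ≤ Pfun x := by
  unfold Pfun
  nlinarith [Int.floor_le x, Int.lt_floor_add_one x]

private lemma lat_Fl {lam : ℝ} {z : ℝ × ℝ} (h : IsLatticePt lam z) :
    IsLatticePt lam (Fl lam z) := by
  obtain ⟨a, b, rfl⟩ := h
  refine ⟨⌊lam * (a : ℝ)⌋ - b, a, ?_⟩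
  simp only [Fl]
  rw [Prod.mk.injEq]
  exact ⟨by push_cast; ring, rfl⟩

private lemma lat_Flinv {lam : ℝ} {z : ℝ × ℝ} (h : IsLatticePt lam z) :
    IsLatticePt lam (Flinv lam z) := by
  obtain ⟨a, b, rfl⟩ := h
  refine ⟨b, ⌊lam * (b : ℝ)⌋ - a, ?_⟩
  simp only [Flinv]
  rw [Prod.mk.injEq]
  exact ⟨rfl, by push_cast; ring⟩

private lemma lat_iter_Fl {lam : ℝ} {z : ℝ × ℝ} (h : IsLatticePt lam z) (k : ℕ) :
    IsLatticePt lam ((Fl lam)^[k] z) := by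
  induction k with
  | zero => simpa using h
  | succ n ih => rw [Function.iterate_succ_apply']; exact lat_Fl ih

private lemma lat_iter_Flinv {lam : ℝ} {z : ℝ × ℝ} (h : IsLatticePt lam z) (k : ℕ) :
    IsLatticePt lam ((Flinv lam)^[k] z) := by
  induction k with
  | zero => simpa using h
  | succ n ih => rw [Function.iterate_succ_apply']; exact lat_Flinv ih

private lemma lat_FlIter {lam : ℝ} {z : ℝ × ℝ} (h : IsLatticePt lam z) (k : ℤ) :
    IsLatticePt lam (FlIter lam k z) := by
  unfold FlIter
  split
  · exact lat_iter_Fl h _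
  · exact lat_iter_Flinv h _

private lemma cross_lemma' (u u' d : ℝ) (p q : ℤ) (hp : p = ⌊u⌋) (hq : q = ⌊u'⌋)
    (hne : p ≠ q) (hd : |u' - u| ≤ d) (hd1 : d < 1) :
    p ≤ max p q ∧ max p q ≤ p + 1 ∧ max p q ≤ q + 1 ∧
      |u - ((max p q : ℤ) : ℝ)| ≤ d := by
  subst hp; subst hq
  obtain ⟨hdl, hdr⟩ := abs_le.mp hd
  have h0 : (0:ℝ) ≤ d := le_trans (abs_nonneg _) hd
  have hfl1 : ⌊u'⌋ ≤ ⌊u⌋ + 1 := by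
    by_contra hc
    push_neg at hc
    have hc2 : ⌊u⌋ + 2 ≤ ⌊u'⌋ := by omega
    have hcr : ((⌊u⌋ : ℤ) : ℝ) + 2 ≤ ((⌊u'⌋ : ℤ) : ℝ) := by exact_mod_cast hc2
    linarith [Int.floor_le u', Int.lt_floor_add_one u]
  have hfl2 : ⌊u⌋ ≤ ⌊u'⌋ + 1 := by
    by_contra hc
    push_neg at hc
    have hc2 : ⌊u'⌋ + 2 ≤ ⌊u⌋ := by omega
    have hcr : ((⌊u'⌋ : ℤ) : ℝ) + 2 ≤ ((⌊u⌋ : ℤ) : ℝ) := by exact_mod_cast hc2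
    linarith [Int.floor_le u, Int.lt_floor_add_one u']
  refine ⟨le_max_left _ _, max_le (by omega) (by omega), max_le (by omega) (by omega), ?_⟩
  rcases lt_or_gt_of_ne hne with h | h
  · rw [max_eq_right h.le, abs_le]
    have h1 : ((⌊u⌋ : ℤ) : ℝ) + 1 ≤ ((⌊u'⌋ : ℤ) : ℝ) := by exact_mod_cast h
    constructor
    · linarith [Int.floor_le u']
    · linarith [Int.lt_floor_add_one u]
  · rw [max_eq_left h.le, abs_le]
    have h1 : ((⌊u'⌋ : ℤ) : ℝ) + 1 ≤ ((⌊u⌋ : ℤ) : ℝ) := by exact_mod_cast h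
    constructor
    · linarith [Int.floor_le u]
    · linarith [Int.lt_floor_add_one u']

set_option maxHeartbeats 2000000 in
/-- **Proposition** (regular points have non-critical orbits). -/
theorem regular_points_noncritical_orbits (e : ℕ) (he : e ∈ Eset) :
    ∃ lam0 > (0 : ℝ), ∀ lam : ℝ, 0 < lam → lam < lam0 →
      ∀ z : ℝ × ℝ, IsRegularPt lam e z →
        ¬∃ w ∈ returnOrbit lam z, ∃ m n : ℤ, Rfl w = (m, n) ∧
          (Rfl ((Fl lam)^[4] w)).1 ≠ m ∧ (Rfl ((Fl lam)^[4] w)).2 ≠ n := by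
  refine ⟨((16:ℝ) * ((nextE e : ℝ) + 3))⁻¹, by positivity, ?_⟩
  intro lam hlam hlam0 z hreg
  rintro ⟨w, hw, m, n, hRw, hm, hn⟩
  obtain ⟨x, y⟩ := w
  set K : ℝ := (nextE e : ℝ) with hKdef
  have hKnn : (0:ℝ) ≤ K := Nat.cast_nonneg _
  have hHam := hreg.1.2 _ hw
  have he1 : (e:ℝ) < Ham (x, y) := hHam.1
  have he2 : Ham (x, y) < K := hHam.2
  have hK1 : (1:ℝ) ≤ K := by
    have h0 : (0:ℝ) < K := lt_of_le_of_lt (le_trans (Nat.cast_nonneg e) he1.le) he2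
    rw [hKdef] at h0 ⊢
    have h1 : 0 < nextE e := by exact_mod_cast h0
    exact_mod_cast h1
  have hsm : lam * (16 * (K + 3)) < 1 := by
    have h16 : (0:ℝ) < 16 * (K + 3) := by positivity
    calc lam * (16 * (K + 3)) < (16 * (K + 3))⁻¹ * (16 * (K + 3)) :=
          mul_lt_mul_of_pos_right hlam0 h16
      _ = 1 := inv_mul_cancel₀ (ne_of_gt h16)
  have hmul0 : 0 ≤ lam * K := mul_nonneg hlam.le hKnn
  have hs1 : lam * (K + 1) < 1/16 := by nlinarith
  have hs2 : lam * (K + 2) < 1/8 := by nlinarith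
  have hs3 : lam * (2*K + 3) < 1/4 := by nlinarith
  have hs4 : lam * (2*K + 4) < 1/4 := by nlinarith
  have hHxy : Pfun x + Pfun y < K := he2
  have hPx := Pfun_ge_sq x
  have hPy := Pfun_ge_sq y
  have habsx : |x| ≤ K := by nlinarith [sq_abs x, sq_nonneg y, abs_nonneg x, sq_nonneg (|x| - K)]
  have habsy : |y| ≤ K := by nlinarith [sq_abs y, sq_nonneg x, abs_nonneg y, sq_nonneg (|y| - K)]
  -- name the four floors along the orbit segment
  set a₀ : ℤ := ⌊x⌋ with ha₀
  set b1 : ℤ := ⌊y⌋ with hb1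
  set a₁ : ℤ := ⌊lam * (a₀:ℝ) - y⌋ with ha₁
  set a₂ : ℤ := ⌊lam * (a₁:ℝ) - x⌋ with ha₂
  set a₃ : ℤ := ⌊lam * (a₂:ℝ) - (lam * (a₀:ℝ) - y)⌋ with ha₃
  set a₄ : ℤ := ⌊lam * (a₃:ℝ) - (lam * (a₁:ℝ) - x)⌋ with ha₄
  have hit : (Fl lam)^[4] (x, y) =
      (lam * (a₃:ℝ) - (lam * (a₁:ℝ) - x), lam * (a₂:ℝ) - (lam * (a₀:ℝ) - y)) := by
    show Fl lam (Fl lam (Fl lam (Fl lam (x, y)))) = _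
    simp only [Fl]
    rfl
  have hR4 : Rfl ((Fl lam)^[4] (x, y)) = (a₄, a₃) := by
    rw [hit]
    simp only [Rfl]
    rfl
  have hRfl_w : Rfl (x, y) = (a₀, b1) := by
    simp only [Rfl]
    rfl
  have hmn := hRfl_w.symm.trans hRw
  have hma : a₀ = m := congrArg Prod.fst hmn
  have hnb : b1 = n := congrArg Prod.snd hmn
  have hnex : a₄ ≠ a₀ := by
    rw [hR4] at hm
    simpa [← hma] using hm
  have hney : a₃ ≠ b1 := by
    rw [hR4] at hn
    simpa [← hnb] using hn
  -- coordinate / floor bounds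
  have hA0 : |(a₀:ℝ)| ≤ K + 1 := by
    have h := abs_floor_le x; rw [← ha₀] at h; linarith
  have hB1 : |(b1:ℝ)| ≤ K + 1 := by
    have h := abs_floor_le y; rw [← hb1] at h; linarith
  have hla₀ : |lam * (a₀:ℝ)| ≤ lam * (K + 1) := by
    rw [abs_mul, abs_of_nonneg hlam.le]
    exact mul_le_mul_of_nonneg_left hA0 hlam.le
  have hA1 : |(a₁:ℝ)| ≤ K + 2 := by
    have h := abs_floor_le (lam * (a₀:ℝ) - y); rw [← ha₁] at h
    have ht := tri (lam * (a₀:ℝ)) y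
    linarith
  have hla₁ : |lam * (a₁:ℝ)| ≤ lam * (K + 2) := by
    rw [abs_mul, abs_of_nonneg hlam.le]
    exact mul_le_mul_of_nonneg_left hA1 hlam.le
  have hA2 : |(a₂:ℝ)| ≤ K + 2 := by
    have h := abs_floor_le (lam * (a₁:ℝ) - x); rw [← ha₂] at h
    have ht := tri (lam * (a₁:ℝ)) x
    linarith
  have hla₂ : |lam * (a₂:ℝ)| ≤ lam * (K + 2) := by
    rw [abs_mul, abs_of_nonneg hlam.le]
    exact mul_le_mul_of_nonneg_left hA2 hlam.le
  have hA3 : |(a₃:ℝ)| ≤ K + 2 := by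
    have h := abs_floor_le (lam * (a₂:ℝ) - (lam * (a₀:ℝ) - y)); rw [← ha₃] at h
    have ht := tri (lam * (a₂:ℝ)) (lam * (a₀:ℝ) - y)
    have ht2 := tri (lam * (a₀:ℝ)) y
    linarith
  -- displacement of the fourth iterate
  have hY'y : lam * (a₂:ℝ) - (lam * (a₀:ℝ) - y) - y = lam * ((a₂:ℝ) - (a₀:ℝ)) := by ring
  have habs20 : |(a₂:ℝ) - (a₀:ℝ)| ≤ 2*K + 3 := by
    have := tri (a₂:ℝ) (a₀:ℝ); linarith
  have hdy : |lam * (a₂:ℝ) - (lam * (a₀:ℝ) - y) - y| ≤ lam * (2*K + 3) := by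
    rw [hY'y, abs_mul, abs_of_nonneg hlam.le]
    exact mul_le_mul_of_nonneg_left habs20 hlam.le
  have hdy1 : |lam * (a₂:ℝ) - (lam * (a₀:ℝ) - y) - y| < 1 := lt_of_le_of_lt hdy (by linarith)
  have hX'x : lam * (a₃:ℝ) - (lam * (a₁:ℝ) - x) - x = lam * ((a₃:ℝ) - (a₁:ℝ)) := by ring
  have habs31 : |(a₃:ℝ) - (a₁:ℝ)| ≤ 2*K + 4 := by
    have := tri (a₃:ℝ) (a₁:ℝ); linarith
  have hdx : |lam * (a₃:ℝ) - (lam * (a₁:ℝ) - x) - x| ≤ lam * (2*K + 4) := by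
    rw [hX'x, abs_mul, abs_of_nonneg hlam.le]
    exact mul_le_mul_of_nonneg_left habs31 hlam.le
  have hdx1 : |lam * (a₃:ℝ) - (lam * (a₁:ℝ) - x) - x| < 1 := lt_of_le_of_lt hdx (by linarith)
  -- the crossed integer lines
  obtain ⟨hM0, hM1, hM4, hMd⟩ :=
    cross_lemma' x (lam * (a₃:ℝ) - (lam * (a₁:ℝ) - x))
      (|lam * (a₃:ℝ) - (lam * (a₁:ℝ) - x) - x|) a₀ a₄ ha₀ ha₄
      (fun hc => hnex hc.symm) le_rfl hdx1
  obtain ⟨hN0, hN1, hN4, hNd⟩ :=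
    cross_lemma' y (lam * (a₂:ℝ) - (lam * (a₀:ℝ) - y))
      (|lam * (a₂:ℝ) - (lam * (a₀:ℝ) - y) - y|) b1 a₃ hb1 ha₃
      (fun hc => hney hc.symm) le_rfl hdy1
  set M : ℤ := max a₀ a₄ with hMdef
  set N : ℤ := max b1 a₃ with hNdef
  have hxM : |x - (M:ℝ)| ≤ lam * (2*K + 4) := le_trans hMd hdx
  have hyN : |y - (N:ℝ)| ≤ lam * (2*K + 3) := le_trans hNd hdy
  -- integer increments near the crossed corner
  have g0a : (a₀:ℝ) - (M:ℝ) ≤ 0 := by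
    have : (a₀:ℝ) ≤ (M:ℝ) := by exact_mod_cast hM0
    linarith
  have g0b : (-1:ℝ) ≤ (a₀:ℝ) - (M:ℝ) := by
    have : (M:ℝ) ≤ (a₀:ℝ) + 1 := by exact_mod_cast hM1
    linarith
  have g2a : (a₃:ℝ) - (N:ℝ) ≤ 0 := by
    have h : a₃ ≤ N := by rw [hNdef]; exact le_max_right _ _
    have : (a₃:ℝ) ≤ (N:ℝ) := by exact_mod_cast h
    linarith
  have g2b : (-1:ℝ) ≤ (a₃:ℝ) - (N:ℝ) := by
    have : (N:ℝ) ≤ (a₃:ℝ) + 1 := by exact_mod_cast hN4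
    linarith
  have hf1 : (a₁:ℝ) ≤ lam * (a₀:ℝ) - y := by
    have h := Int.floor_le (lam * (a₀:ℝ) - y); rw [← ha₁] at h; exact h
  have hf1' : lam * (a₀:ℝ) - y < (a₁:ℝ) + 1 := by
    have h := Int.lt_floor_add_one (lam * (a₀:ℝ) - y); rw [← ha₁] at h; exact h
  have hf2 : (a₂:ℝ) ≤ lam * (a₁:ℝ) - x := by
    have h := Int.floor_le (lam * (a₁:ℝ) - x); rw [← ha₂] at h; exact h
  have hf2' : lam * (a₁:ℝ) - x < (a₂:ℝ) + 1 := by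
    have h := Int.lt_floor_add_one (lam * (a₁:ℝ) - x); rw [← ha₂] at h; exact h
  have g3 : -1 ≤ a₁ + N ∧ a₁ + N ≤ 0 := by
    obtain ⟨u1, u2⟩ := abs_le.mp hla₀
    obtain ⟨u3, u4⟩ := abs_le.mp hyN
    have hr1 : (-2:ℝ) < ((a₁ + N : ℤ) : ℝ) := by push_cast; linarith
    have hr2 : ((a₁ + N : ℤ) : ℝ) < 1 := by push_cast; linarith
    have h1 : (-2:ℤ) < a₁ + N := by exact_mod_cast hr1
    have h2 : a₁ + N < 1 := by exact_mod_cast hr2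
    omega
  have g4 : -1 ≤ a₂ + M ∧ a₂ + M ≤ 0 := by
    obtain ⟨u1, u2⟩ := abs_le.mp hla₁
    obtain ⟨u3, u4⟩ := abs_le.mp hxM
    have hr1 : (-2:ℝ) < ((a₂ + M : ℤ) : ℝ) := by push_cast; linarith
    have hr2 : ((a₂ + M : ℤ) : ℝ) < 1 := by push_cast; linarith
    have h1 : (-2:ℤ) < a₂ + M := by exact_mod_cast hr1
    have h2 : a₂ + M < 1 := by exact_mod_cast hr2
    omega
  have g3a : (-1:ℝ) ≤ (a₁:ℝ) + (N:ℝ) := by exact_mod_cast g3.1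
  have g3b : (a₁:ℝ) + (N:ℝ) ≤ 0 := by exact_mod_cast g3.2
  have g4a : (-1:ℝ) ≤ (a₂:ℝ) + (M:ℝ) := by exact_mod_cast g4.1
  have g4b : (a₂:ℝ) + (M:ℝ) ≤ 0 := by exact_mod_cast g4.2
  -- bounds by (2m+1), (2n+1)
  have habs2M : |2*(M:ℝ)| ≤ |2*(M:ℝ) + 1| + 1 := by
    have h := tri (2*(M:ℝ) + 1) 1
    rw [show 2*(M:ℝ) + 1 - 1 = 2*(M:ℝ) by ring] at h
    simpa using h
  have habs2N : |2*(N:ℝ)| ≤ |2*(N:ℝ) + 1| + 1 := by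
    have h := tri (2*(N:ℝ) + 1) 1
    rw [show 2*(N:ℝ) + 1 - 1 = 2*(N:ℝ) by ring] at h
    simpa using h
  have hH1 : |(a₂:ℝ) - (a₀:ℝ)| ≤ |2*(M:ℝ) + 1| + 2 := by
    rw [abs_le]
    constructor
    · linarith [le_abs_self (2*(M:ℝ))]
    · linarith [neg_abs_le (2*(M:ℝ))]
  have hH2 : |(a₃:ℝ) - (a₁:ℝ)| ≤ |2*(N:ℝ) + 1| + 2 := by
    rw [abs_le]
    constructor
    · linarith [le_abs_self (2*(N:ℝ)), neg_abs_le (2*(N:ℝ))]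
    · linarith [le_abs_self (2*(N:ℝ)), neg_abs_le (2*(N:ℝ))]
  -- w is a transition point in Σ
  have hlatw : IsLatticePt lam (x, y) := by
    obtain ⟨k, _, _, hk⟩ := hw
    rw [hk]
    exact lat_FlIter hreg.1.1.1 k
  have hRne : Rfl ((Fl lam)^[4] (x, y)) ≠ Rfl (x, y) := by
    rw [hR4, hRfl_w]
    intro hc
    exact hnex (congrArg Prod.fst hc)
  have hsig : (x, y) ∈ SigmaSet lam := by
    refine ⟨⟨hlatw, hRne⟩, M, N, ?_⟩
    have hmaxM := le_max_left |2*(M:ℝ) + 1| |2*(N:ℝ) + 1|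
    have hmaxN := le_max_right |2*(M:ℝ) + 1| |2*(N:ℝ) + 1|
    refine max_le ?_ ?_
    · refine le_trans hMd ?_
      rw [hX'x, abs_mul, abs_of_nonneg hlam.le]
      exact mul_le_mul_of_nonneg_left (by linarith) hlam.le
    · refine le_trans hNd ?_
      rw [hY'y, abs_mul, abs_of_nonneg hlam.le]
      exact mul_le_mul_of_nonneg_left (by linarith) hlam.le
  have hmem : (x, y) ∈ returnOrbit lam z ∩ SigmaSet lam := ⟨hw, hsig⟩
  rw [hreg.2.2] at hmem
  exact hmem
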